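/- (Oscillatory integral estimate (34), second interval.) Suppose q is differentiable with bounded derivative on (π/2,π] and Δ is twice differentiable with bounded second derivative on (π/2,π], with Δ′(x) ≤ 1 on (π/2,π] and lim_{x→π/2⁺} Δ(x) = 0. Then there exist C > 0 and s₀ > 0 such that for all s ≥ s₀ and all x ∈ [π/2,π]: |∫_{π/2}ˣ (√2·q(τ)/2)·cos( s(2τ−Δ(τ))/p₂ + π/4 ) dτ| ≤ C/s and |∫_{π/2}ˣ (√2·q(τ)/2)·sin( s(2τ−Δ(τ))/p₂ + π/4 ) dτ| ≤ C/s. -/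

import Mathlib

set_option maxHeartbeats 1000000


open Set Filter intervalIntegral MeasureTheory

noncomputable section

theorem stmt13
    (p2 : ℝ) (q Δ q' Δ' Δ'' : ℝ → ℝ)
    (hp2 : 0 < p2)
    (hqc : ContinuousOn q (Set.Ioc (Real.pi/2) Real.pi))
    (hqlim : ∃ L : ℝ, Filter.Tendsto q (nhdsWithin (Real.pi/2) (Set.Ioi (Real.pi/2))) (nhds L))
    (hΔc : ContinuousOn Δ (Set.Ioc (Real.pi/2) Real.pi))
    (hΔlim : ∃ L : ℝ, Filter.Tendsto Δ (nhdsWithin (Real.pi/2) (Set.Ioi (Real.pi/2))) (nhds L))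
    (hΔnonneg : ∀ x ∈ Set.Ioc (Real.pi/2) Real.pi, 0 ≤ Δ x)
    (hret : ∀ x ∈ Set.Ioc (Real.pi/2) Real.pi, Real.pi/2 ≤ x - Δ x)
    (hq' : ∀ x ∈ Set.Ioc (Real.pi/2) Real.pi, HasDerivAt q (q' x) x)
    (hq'bdd : ∃ M : ℝ, ∀ x ∈ Set.Ioc (Real.pi/2) Real.pi, |q' x| ≤ M)
    (hΔ' : ∀ x ∈ Set.Ioc (Real.pi/2) Real.pi, HasDerivAt Δ (Δ' x) x)
    (hΔ'' : ∀ x ∈ Set.Ioc (Real.pi/2) Real.pi, HasDerivAt Δ' (Δ'' x) x)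
    (hΔ''bdd : ∃ M : ℝ, ∀ x ∈ Set.Ioc (Real.pi/2) Real.pi, |Δ'' x| ≤ M)
    (hΔ'le : ∀ x ∈ Set.Ioc (Real.pi/2) Real.pi, Δ' x ≤ 1)
    (hΔrlim : Filter.Tendsto Δ (nhdsWithin (Real.pi/2) (Set.Ioi (Real.pi/2))) (nhds 0))
    :
    ∃ C : ℝ, 0 < C ∧ ∃ s0 : ℝ, 0 < s0 ∧ ∀ s : ℝ, s0 ≤ s → ∀ x ∈ Set.Icc (Real.pi/2) Real.pi,
      |∫ τ in (Real.pi/2)..x, (Real.sqrt 2 * q τ / 2) * Real.cos (s*(2*τ - Δ τ)/p2 + Real.pi/4)| ≤ C / s ∧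
      |∫ τ in (Real.pi/2)..x, (Real.sqrt 2 * q τ / 2) * Real.sin (s*(2*τ - Δ τ)/p2 + Real.pi/4)| ≤ C / s := by
  obtain ⟨M1, hM1⟩ := hq'bdd
  obtain ⟨M2, hM2⟩ := hΔ''bdd
  have hpi0 : (0:ℝ) < Real.pi := Real.pi_pos
  have hpi : Real.pi/2 < Real.pi := by linarith
  have hπmem : Real.pi ∈ Set.Ioc (Real.pi/2) Real.pi := ⟨hpi, le_refl _⟩
  have hM1_0 : 0 ≤ M1 := le_trans (abs_nonneg _) (hM1 _ hπmem)
  have hM2_0 : 0 ≤ M2 := le_trans (abs_nonneg _) (hM2 _ hπmem)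
  have hsqrt2 : Real.sqrt 2 ≤ 2 := by
    nlinarith [Real.sq_sqrt (by norm_num : (0:ℝ) ≤ 2), Real.sqrt_nonneg 2]
  have hsqrt2_0 : 0 ≤ Real.sqrt 2 := Real.sqrt_nonneg 2
  set K : ℝ := |q Real.pi| + M1 * Real.pi with hKdef
  have hK0 : 0 ≤ K := by positivity
  -- q is bounded by K on the interval
  have hqbd : ∀ τ ∈ Set.Ioc (Real.pi/2) Real.pi, |q τ| ≤ K := by
    intro τ hτ
    have hconv : Convex ℝ (Set.Ioc (Real.pi/2) Real.pi) := convex_Ioc _ _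
    have hder : ∀ y ∈ Set.Ioc (Real.pi/2) Real.pi,
        HasDerivWithinAt q (q' y) (Set.Ioc (Real.pi/2) Real.pi) y :=
      fun y hy => (hq' y hy).hasDerivWithinAt
    have hbd : ∀ y ∈ Set.Ioc (Real.pi/2) Real.pi, ‖q' y‖ ≤ M1 := fun y hy => hM1 y hy
    have := hconv.norm_image_sub_le_of_norm_hasDerivWithin_le hder hbd hπmem hτ
    have h1 : ‖q τ - q Real.pi‖ ≤ M1 * ‖τ - Real.pi‖ := this
    have h2 : ‖τ - Real.pi‖ ≤ Real.pi := by
      rw [Real.norm_eq_abs, abs_sub_le_iff]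
      constructor <;> [linarith [hτ.2]; linarith [hτ.1]]
    have h3 : M1 * ‖τ - Real.pi‖ ≤ M1 * Real.pi := by
      exact mul_le_mul_of_nonneg_left h2 hM1_0
    calc |q τ| ≤ |q τ - q Real.pi| + |q Real.pi| := by
            have := abs_sub_abs_le_abs_sub (q τ) (q Real.pi); linarith [abs_abs (q τ)]
      _ ≤ M1 * Real.pi + |q Real.pi| := by
            rw [Real.norm_eq_abs] at h1; linarith
      _ = K := by rw [hKdef]; ring
  -- bound for the amplitude
  have hgbd : ∀ τ ∈ Set.Ioc (Real.pi/2) Real.pi, |Real.sqrt 2 * q τ / 2| ≤ K := by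
    intro τ hτ
    have := hqbd τ hτ
    rw [abs_div, abs_mul, abs_of_nonneg hsqrt2_0]
    have h1 : Real.sqrt 2 * |q τ| ≤ 2 * K := by nlinarith [abs_nonneg (q τ)]
    rw [abs_of_pos (by norm_num : (0:ℝ) < 2)]
    linarith
  set C' : ℝ := p2 * (2*K + Real.pi*(M1 + K*M2)) with hC'def
  have hC'0 : 0 ≤ C' := by positivity
  refine ⟨C' + 1, by positivity, 1, one_pos, ?_⟩
  intro s hs x hx
  have hs0 : (0:ℝ) < s := lt_of_lt_of_le one_pos hs
  have hx2 : x ≤ Real.pi := hx.2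
  have key : ∀ T V : ℝ → ℝ, Continuous T → (∀ t, HasDerivAt V (T t) t) →
      (∀ t, |T t| ≤ 1) → (∀ t, |V t| ≤ 1) →
      |∫ τ in (Real.pi/2)..x, (Real.sqrt 2 * q τ / 2) * T (s*(2*τ - Δ τ)/p2 + Real.pi/4)|
        ≤ (C'+1)/s := by
    intro T V hTc hVd hT1 hV1
    set f : ℝ → ℝ := fun τ => (Real.sqrt 2 * q τ / 2) * T (s*(2*τ - Δ τ)/p2 + Real.pi/4) with hfdef
    have hfbd : ∀ τ ∈ Set.Ioc (Real.pi/2) Real.pi, |f τ| ≤ K := by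
      intro τ hτ
      rw [hfdef, abs_mul]
      calc |Real.sqrt 2 * q τ / 2| * |T (s*(2*τ - Δ τ)/p2 + Real.pi/4)|
          ≤ K * 1 := mul_le_mul (hgbd τ hτ) (hT1 _) (abs_nonneg _) hK0
        _ = K := mul_one K
    rcases eq_or_lt_of_le hx.1 with heq | hxgt
    · rw [← heq, intervalIntegral.integral_same, abs_zero]
      positivity
    -- integrability of f on [π/2, x]
    have hsubx : Set.Ioc (Real.pi/2) x ⊆ Set.Ioc (Real.pi/2) Real.pi :=
      Set.Ioc_subset_Ioc le_rfl hx2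
    have hfc : ContinuousOn f (Set.Ioc (Real.pi/2) x) := by
      apply ContinuousOn.mul
      · exact ((continuousOn_const.mul (hqc.mono hsubx)).div_const 2)
      · apply hTc.comp_continuousOn
        apply ContinuousOn.add _ continuousOn_const
        apply ContinuousOn.div_const
        exact continuousOn_const.mul ((continuousOn_const.mul continuousOn_id).sub (hΔc.mono hsubx))
    have hfint : IntervalIntegrable f volume (Real.pi/2) x := by
      rw [intervalIntegrable_iff_integrableOn_Ioc_of_le hx.1]
      refine ⟨hfc.aestronglyMeasurable measurableSet_Ioc, ?_⟩
      apply MeasureTheory.HasFiniteIntegral.restrict_of_bounded (C := K) measure_Ioc_lt_top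
      filter_upwards [MeasureTheory.ae_restrict_mem measurableSet_Ioc] with τ hτ
      exact hfbd τ (hsubx hτ)
    -- the key integration by parts estimate on [a, x]
    have inner : ∀ a, Real.pi/2 < a → a ≤ x → |∫ τ in a..x, f τ| ≤ C'/s := by
      intro a ha1 ha2
      have huIcc : Set.uIcc a x = Set.Icc a x := Set.uIcc_of_le ha2
      have hsub : Set.Icc a x ⊆ Set.Ioc (Real.pi/2) Real.pi :=
        fun τ hτ => ⟨lt_of_lt_of_le ha1 hτ.1, le_trans hτ.2 hx2⟩
      have hD1 : ∀ τ ∈ Set.Ioc (Real.pi/2) Real.pi, (1:ℝ) ≤ 2 - Δ' τ := by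
        intro τ hτ; linarith [hΔ'le τ hτ]
      have hDne : ∀ τ ∈ Set.Ioc (Real.pi/2) Real.pi, (2 - Δ' τ) ≠ 0 := by
        intro τ hτ; have := hD1 τ hτ; linarith
      set u : ℝ → ℝ := fun τ => p2 * (Real.sqrt 2 * q τ / 2) / (s * (2 - Δ' τ)) with hudef
      set u' : ℝ → ℝ := fun τ => p2 * (Real.sqrt 2 * q' τ / 2) / (s * (2 - Δ' τ))
        + p2 * (Real.sqrt 2 * q τ / 2) * Δ'' τ / (s * (2 - Δ' τ)^2) with hu'def
      set ψ : ℝ → ℝ := fun τ => s*(2*τ - Δ τ)/p2 + Real.pi/4 with hψdef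
      set v : ℝ → ℝ := fun τ => V (ψ τ) with hvdef
      set v' : ℝ → ℝ := fun τ => T (ψ τ) * (s * (2 - Δ' τ) / p2) with hv'def
      have hu : ∀ τ ∈ Set.uIcc a x, HasDerivAt u (u' τ) τ := by
        intro τ hτ
        rw [huIcc] at hτ
        have hτ' := hsub hτ
        have hnum : HasDerivAt (fun τ => p2 * (Real.sqrt 2 * q τ / 2))
            (p2 * (Real.sqrt 2 * q' τ / 2)) τ :=
          (((hq' τ hτ').const_mul (Real.sqrt 2)).div_const 2).const_mul p2
        have hden : HasDerivAt (fun τ => s * (2 - Δ' τ)) (s * (0 - Δ'' τ)) τ :=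
          ((hasDerivAt_const τ (2:ℝ)).sub (hΔ'' τ hτ')).const_mul s
        have hne : s * (2 - Δ' τ) ≠ 0 :=
          ne_of_gt (mul_pos hs0 (lt_of_lt_of_le one_pos (hD1 τ hτ')))
        have h := hnum.div hden hne
        refine h.congr_deriv ?_
        rw [hu'def]
        have hD := hDne τ hτ'
        field_simp
        ring
      have hv : ∀ τ ∈ Set.uIcc a x, HasDerivAt v (v' τ) τ := by
        intro τ hτ
        rw [huIcc] at hτ
        have hτ' := hsub hτ
        have h1 : HasDerivAt (fun τ => 2*τ - Δ τ) (2 - Δ' τ) τ := by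
          exact (((hasDerivAt_id τ).const_mul (2:ℝ)).sub (hΔ' τ hτ')).congr_deriv (by ring)
        have h2 : HasDerivAt ψ (s * (2 - Δ' τ) / p2) τ := by
          have := ((h1.const_mul s).div_const p2).add_const (Real.pi/4)
          convert this using 1
        have h3 := (hVd (ψ τ)).comp τ h2
        rw [hv'def]
        exact h3
      -- integrability of u'
      have hΔ'c : ContinuousOn Δ' (Set.Ioc (Real.pi/2) Real.pi) :=
        fun τ hτ => ((hΔ'' τ hτ).continuousAt).continuousWithinAt
      have hu'bd : ∀ τ ∈ Set.Ioc (Real.pi/2) Real.pi, |u' τ| ≤ p2*(M1 + K*M2)/s := by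
        intro τ hτ
        have hD := hD1 τ hτ
        have hq'τ := hM1 τ hτ
        have hΔ''τ := hM2 τ hτ
        have hgτ := hgbd τ hτ
        have hg'τ : |Real.sqrt 2 * q' τ / 2| ≤ M1 := by
          rw [abs_div, abs_mul, abs_of_nonneg hsqrt2_0,
            abs_of_pos (by norm_num : (0:ℝ) < 2)]
          rw [div_le_iff₀ (by norm_num : (0:ℝ) < 2)]
          nlinarith [abs_nonneg (q' τ)]
        have hsD : s ≤ s * (2 - Δ' τ) := by nlinarith
        have hsD2 : s ≤ s * (2 - Δ' τ)^2 := by nlinarith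
        have hsDpos : 0 < s * (2 - Δ' τ) := by nlinarith
        have hsD2pos : 0 < s * (2 - Δ' τ)^2 := by nlinarith
        rw [hu'def]
        have t1 : |p2 * (Real.sqrt 2 * q' τ / 2) / (s * (2 - Δ' τ))| ≤ p2 * M1 / s := by
          rw [abs_div, abs_mul, abs_of_pos hp2, abs_of_pos hsDpos]
          apply div_le_div₀ (by positivity) _ hs0 hsD
          exact mul_le_mul_of_nonneg_left hg'τ (le_of_lt hp2)
        have t2 : |p2 * (Real.sqrt 2 * q τ / 2) * Δ'' τ / (s * (2 - Δ' τ)^2)| ≤ p2 * (K * M2) / s := by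
          rw [abs_div, abs_mul, abs_mul, abs_of_pos hp2, abs_of_pos hsD2pos]
          apply div_le_div₀ (by positivity) _ hs0 hsD2
          calc p2 * |Real.sqrt 2 * q τ / 2| * |Δ'' τ| ≤ p2 * K * M2 := by
                apply mul_le_mul _ hΔ''τ (abs_nonneg _) (by positivity)
                exact mul_le_mul_of_nonneg_left hgτ (le_of_lt hp2)
            _ = p2 * (K * M2) := by ring
        calc |p2 * (Real.sqrt 2 * q' τ / 2) / (s * (2 - Δ' τ))
              + p2 * (Real.sqrt 2 * q τ / 2) * Δ'' τ / (s * (2 - Δ' τ)^2)|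
            ≤ |p2 * (Real.sqrt 2 * q' τ / 2) / (s * (2 - Δ' τ))|
              + |p2 * (Real.sqrt 2 * q τ / 2) * Δ'' τ / (s * (2 - Δ' τ)^2)| := abs_add_le _ _
          _ ≤ p2 * M1 / s + p2 * (K * M2) / s := add_le_add t1 t2
          _ = p2*(M1 + K*M2)/s := by ring
      have hsubIoc : Set.Ioc a x ⊆ Set.Ioc (Real.pi/2) Real.pi :=
        fun τ hτ => ⟨lt_trans ha1 hτ.1, le_trans hτ.2 hx2⟩
      have hu'int : IntervalIntegrable u' volume a x := by
        rw [intervalIntegrable_iff_integrableOn_Ioc_of_le ha2]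
        set w : ℝ → ℝ := fun τ => p2 * (Real.sqrt 2 * deriv q τ / 2) / (s * (2 - Δ' τ))
          + p2 * (Real.sqrt 2 * q τ / 2) * deriv Δ' τ / (s * (2 - Δ' τ)^2) with hwdef
        have hqm : AEStronglyMeasurable q (volume.restrict (Set.Ioc a x)) :=
          (hqc.mono hsubIoc).aestronglyMeasurable measurableSet_Ioc
        have hΔ'm : AEStronglyMeasurable Δ' (volume.restrict (Set.Ioc a x)) :=
          (hΔ'c.mono hsubIoc).aestronglyMeasurable measurableSet_Ioc
        have hdqm : AEStronglyMeasurable (deriv q) (volume.restrict (Set.Ioc a x)) :=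
          (measurable_deriv q).aestronglyMeasurable
        have hdΔ'm : AEStronglyMeasurable (deriv Δ') (volume.restrict (Set.Ioc a x)) :=
          (measurable_deriv Δ').aestronglyMeasurable
        have hwm : AEStronglyMeasurable w (volume.restrict (Set.Ioc a x)) := by
          have h1 : AEMeasurable q (volume.restrict (Set.Ioc a x)) := hqm.aemeasurable
          have h2 : AEMeasurable Δ' (volume.restrict (Set.Ioc a x)) := hΔ'm.aemeasurable
          have h3 : AEMeasurable (deriv q) (volume.restrict (Set.Ioc a x)) := hdqm.aemeasurable
          have h4 : AEMeasurable (deriv Δ') (volume.restrict (Set.Ioc a x)) := hdΔ'm.aemeasurable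
          apply AEMeasurable.aestronglyMeasurable
          rw [hwdef]
          apply AEMeasurable.add
          · exact ((aemeasurable_const.mul
              ((aemeasurable_const.mul h3).div aemeasurable_const)).div
              (aemeasurable_const.mul (aemeasurable_const.sub h2)))
          · exact (((aemeasurable_const.mul
              ((aemeasurable_const.mul h1).div aemeasurable_const)).mul h4).div
              (aemeasurable_const.mul ((aemeasurable_const.sub h2).pow aemeasurable_const)))
        have heqw : u' =ᵐ[volume.restrict (Set.Ioc a x)] w := by
          filter_upwards [MeasureTheory.ae_restrict_mem measurableSet_Ioc] with τ hτ
          have hτ' := hsubIoc hτ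
          simp only [hu'def, hwdef]
          rw [(hq' τ hτ').deriv, (hΔ'' τ hτ').deriv]
        refine ⟨hwm.congr heqw.symm, ?_⟩
        apply MeasureTheory.HasFiniteIntegral.restrict_of_bounded
          (C := p2*(M1 + K*M2)/s) measure_Ioc_lt_top
        filter_upwards [MeasureTheory.ae_restrict_mem measurableSet_Ioc] with τ hτ
        exact hu'bd τ (hsubIoc hτ)
      have hv'int : IntervalIntegrable v' volume a x := by
        apply ContinuousOn.intervalIntegrable
        rw [huIcc, hv'def]
        apply ContinuousOn.mul
        · apply hTc.comp_continuousOn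
          rw [hψdef]
          apply ContinuousOn.add _ continuousOn_const
          apply ContinuousOn.div_const
          exact continuousOn_const.mul
            ((continuousOn_const.mul continuousOn_id).sub ((hΔc.mono hsub)))
        · apply ContinuousOn.div_const
          exact continuousOn_const.mul (continuousOn_const.sub ((hΔ'c.mono hsub)))
      have hIBP := intervalIntegral.integral_mul_deriv_eq_deriv_mul hu hv hu'int hv'int
      have hcongr : ∫ τ in a..x, f τ = ∫ τ in a..x, u τ * v' τ := by
        apply intervalIntegral.integral_congr
        intro τ hτ
        rw [huIcc] at hτ
        have hτ' := hsub hτ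
        rw [hfdef, hudef, hv'def, hψdef]
        have hD := hDne τ hτ'
        field_simp
      -- bounds on boundary terms
      have hubd : ∀ τ ∈ Set.Ioc (Real.pi/2) Real.pi, |u τ| ≤ p2 * K / s := by
        intro τ hτ
        have hD := hD1 τ hτ
        have hsD : s ≤ s * (2 - Δ' τ) := by nlinarith
        have hsDpos : 0 < s * (2 - Δ' τ) := by nlinarith
        rw [hudef]
        rw [abs_div, abs_mul, abs_of_pos hp2, abs_of_pos hsDpos]
        apply div_le_div₀ (by positivity) _ hs0 hsD
        exact mul_le_mul_of_nonneg_left (hgbd τ hτ) (le_of_lt hp2)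
      have hamem : a ∈ Set.Ioc (Real.pi/2) Real.pi := ⟨ha1, le_trans ha2 hx2⟩
      have hxmem : x ∈ Set.Ioc (Real.pi/2) Real.pi := ⟨lt_of_lt_of_le ha1 ha2, hx2⟩
      have hbx : |u x * v x| ≤ p2 * K / s := by
        rw [abs_mul]
        calc |u x| * |v x| ≤ (p2*K/s) * 1 :=
              mul_le_mul (hubd x hxmem) (hV1 _) (abs_nonneg _) (by positivity)
          _ = p2*K/s := mul_one _
      have hba : |u a * v a| ≤ p2 * K / s := by
        rw [abs_mul]
        calc |u a| * |v a| ≤ (p2*K/s) * 1 :=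
              mul_le_mul (hubd a hamem) (hV1 _) (abs_nonneg _) (by positivity)
          _ = p2*K/s := mul_one _
      have hintbd : |∫ τ in a..x, u' τ * v τ| ≤ (p2*(M1 + K*M2)/s) * Real.pi := by
        have h1 : ∀ τ ∈ Set.uIoc a x, ‖u' τ * v τ‖ ≤ p2*(M1 + K*M2)/s := by
          intro τ hτ
          rw [Set.uIoc_of_le ha2] at hτ
          have hτ' := hsubIoc hτ
          rw [Real.norm_eq_abs, abs_mul]
          calc |u' τ| * |v τ| ≤ (p2*(M1 + K*M2)/s) * 1 :=
                mul_le_mul (hu'bd τ hτ') (hV1 _) (abs_nonneg _) (by positivity)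
            _ = p2*(M1 + K*M2)/s := mul_one _
        have h2 := intervalIntegral.norm_integral_le_of_norm_le_const h1
        rw [Real.norm_eq_abs] at h2
        have h3 : |x - a| ≤ Real.pi := by
          rw [abs_of_nonneg (by linarith)]
          linarith [hamem.1]
        calc |∫ τ in a..x, u' τ * v τ| ≤ (p2*(M1 + K*M2)/s) * |x - a| := h2
          _ ≤ (p2*(M1 + K*M2)/s) * Real.pi :=
              mul_le_mul_of_nonneg_left h3 (by positivity)
      calc |∫ τ in a..x, f τ| = |u x * v x - u a * v a - ∫ τ in a..x, u' τ * v τ| := by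
            rw [hcongr, hIBP]
        _ ≤ |u x * v x| + |u a * v a| + |∫ τ in a..x, u' τ * v τ| := by
            have := abs_sub (u x * v x - u a * v a) (∫ τ in a..x, u' τ * v τ)
            have := abs_sub (u x * v x) (u a * v a)
            calc |u x * v x - u a * v a - ∫ τ in a..x, u' τ * v τ|
                ≤ |u x * v x - u a * v a| + |∫ τ in a..x, u' τ * v τ| := abs_sub _ _
              _ ≤ |u x * v x| + |u a * v a| + |∫ τ in a..x, u' τ * v τ| := by
                  linarith [abs_sub (u x * v x) (u a * v a)]
        _ ≤ p2*K/s + p2*K/s + (p2*(M1 + K*M2)/s) * Real.pi :=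
            add_le_add (add_le_add hbx hba) hintbd
        _ = C'/s := by rw [hC'def]; field_simp; ring
    -- limiting argument
    have main : |∫ τ in (Real.pi/2)..x, f τ| ≤ C'/s := by
      apply le_of_forall_pos_le_add
      intro ε hε
      set a : ℝ := min x (Real.pi/2 + ε/(K+1)) with hadef
      have hεK : 0 < ε/(K+1) := by positivity
      have ha1 : Real.pi/2 < a := lt_min hxgt (by linarith)
      have ha2 : a ≤ x := min_le_left _ _
      have ha3 : a ≤ Real.pi/2 + ε/(K+1) := min_le_right _ _
      have hint1 : IntervalIntegrable f volume (Real.pi/2) a := by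
        apply hfint.mono_set
        rw [Set.uIcc_of_le (le_of_lt ha1), Set.uIcc_of_le hx.1]
        exact Set.Icc_subset_Icc le_rfl ha2
      have hint2 : IntervalIntegrable f volume a x := by
        apply hfint.mono_set
        rw [Set.uIcc_of_le ha2, Set.uIcc_of_le hx.1]
        exact Set.Icc_subset_Icc (le_of_lt ha1) le_rfl
      have hsplit : (∫ τ in (Real.pi/2)..a, f τ) + ∫ τ in a..x, f τ
          = ∫ τ in (Real.pi/2)..x, f τ :=
        intervalIntegral.integral_add_adjacent_intervals hint1 hint2
      have hbd1 : |∫ τ in (Real.pi/2)..a, f τ| ≤ K * (a - Real.pi/2) := by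
        have h1 : ∀ τ ∈ Set.uIoc (Real.pi/2) a, ‖f τ‖ ≤ K := by
          intro τ hτ
          rw [Set.uIoc_of_le (le_of_lt ha1)] at hτ
          exact hfbd τ ⟨hτ.1, le_trans hτ.2 (le_trans ha2 hx2)⟩
        have h2 := intervalIntegral.norm_integral_le_of_norm_le_const h1
        rw [Real.norm_eq_abs] at h2
        rw [abs_of_nonneg (show (0:ℝ) ≤ a - Real.pi/2 by linarith)] at h2
        exact h2
      have hbd2 := inner a ha1 ha2
      have hKa : K * (a - Real.pi/2) ≤ ε := by
        have h1 : a - Real.pi/2 ≤ ε/(K+1) := by linarith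
        have h2 : K * (a - Real.pi/2) ≤ K * (ε/(K+1)) :=
          mul_le_mul_of_nonneg_left h1 hK0
        have h3 : K * (ε/(K+1)) ≤ ε := by
          rw [mul_div_assoc']
          rw [div_le_iff₀ (by positivity)]
          nlinarith
        linarith
      calc |∫ τ in (Real.pi/2)..x, f τ|
          = |(∫ τ in (Real.pi/2)..a, f τ) + ∫ τ in a..x, f τ| := by rw [hsplit]
        _ ≤ |∫ τ in (Real.pi/2)..a, f τ| + |∫ τ in a..x, f τ| := abs_add_le _ _
        _ ≤ K * (a - Real.pi/2) + C'/s := add_le_add hbd1 hbd2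
        _ ≤ C'/s + ε := by linarith
    calc |∫ τ in (Real.pi/2)..x, f τ| ≤ C'/s := main
      _ ≤ (C'+1)/s := (div_le_div_iff_of_pos_right hs0).mpr (by linarith)
  constructor
  · exact key Real.cos Real.sin Real.continuous_cos (fun t => Real.hasDerivAt_sin t)
      (fun t => Real.abs_cos_le_one t) (fun t => Real.abs_sin_le_one t)
  · exact key Real.sin (fun t => -Real.cos t) Real.continuous_sin
      (fun t => (Real.hasDerivAt_cos t).neg.congr_deriv (by simp))
      (fun t => Real.abs_sin_le_one t) (fun t => by simpa using Real.abs_cos_le_one t)
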